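/- For every positive integer L, the square function φ(x) = x² on [−1,1] satisfies dist(φ, F_{L,2}(ℝ)) ≤ 2^{−2L}, i.e., there exists f in the neural-net class F_{L,2}(ℝ) with |x² − f(x)| ≤ 2^{−2L} for all x ∈ [−1,1]. -/

import Mathlib

noncomputable section

/-- `f : ℝ^d → ℝ` belongs to the neural-net class `F_{L,M}(ℝ^d)`. -/
def NNClass (d L M : ℕ) (f : (Fin d → ℝ) → ℝ) : Prop :=
  ∃ y : Fin L → Fin M → (Fin d → ℝ) → ℝ,
    (∀ (h0 : 0 < L) (m : Fin M), ∃ (w : Fin d → ℝ) (b : ℝ),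
      ∀ x, y ⟨0, h0⟩ m x = max (b + ∑ i, w i * x i) 0) ∧
    (∀ (l : ℕ) (hl : l + 1 < L) (m : Fin M),
      ∃ (w : Fin d → ℝ) (v : Fin M → ℝ) (b : ℝ),
      ∀ x, y ⟨l + 1, hl⟩ m x =
        max (b + ∑ i, w i * x i + ∑ j, v j * y ⟨l, Nat.lt_of_succ_lt hl⟩ j x) 0) ∧
    (∃ (w : Fin d → ℝ) (c : Fin L → Fin M → ℝ) (b : ℝ),
      ∀ x, f x = b + ∑ i, w i * x i + ∑ l, ∑ m, c l m * y l m x)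

namespace SquareApproxAux

/-- Hat-function step, expressed via ReLUs so identities hold globally. -/
noncomputable def gg (u : ℝ) : ℝ := 2 * max u 0 - 4 * max (u - 1/2) 0

/-- Iterated hat function. -/
noncomputable def B : ℕ → ℝ → ℝ
  | 0, u => u
  | n+1, u => gg (B n u)

lemma B_shift (n : ℕ) (u : ℝ) : B (n+1) u = B n (gg u) := by
  induction n with
  | zero => rfl
  | succ n ih => show gg (B (n+1) u) = gg (B n (gg u)); rw [ih]

lemma gg_mem {u : ℝ} (hu : u ∈ Set.Icc (0:ℝ) 1) : gg u ∈ Set.Icc (0:ℝ) 1 := by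
  obtain ⟨h0, h1⟩ := hu
  unfold gg
  rcases le_total u (1/2) with h | h
  · rw [max_eq_left h0, max_eq_right (by linarith)]
    constructor <;> [linarith; linarith]
  · rw [max_eq_left h0, max_eq_left (by linarith)]
    constructor <;> [linarith; linarith]

/-- Approximation after `n` refinement steps, in recursive form. -/
noncomputable def T : ℕ → ℝ → ℝ
  | 0, u => u
  | n+1, u => u - gg u / 2 + T n (gg u) / 4

lemma T_key (n : ℕ) : ∀ u ∈ Set.Icc (0:ℝ) 1, |T n u - u^2| ≤ (1/4) * (1/4)^n := by
  induction n with
  | zero =>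
    rintro u ⟨h0, h1⟩
    simp only [T, pow_zero, mul_one]
    rw [abs_le]
    constructor
    · nlinarith
    · nlinarith [sq_nonneg (u - 1/2)]
  | succ n ih =>
    rintro u ⟨h0, h1⟩
    have hv := gg_mem ⟨h0, h1⟩
    have key : T (n+1) u - u^2 = (T n (gg u) - (gg u)^2) / 4 := by
      show u - gg u / 2 + T n (gg u) / 4 - u^2 = _
      rcases le_total u (1/2) with h | h
      · have hg : gg u = 2 * u := by
          unfold gg; rw [max_eq_left h0, max_eq_right (by linarith)]; ring
        rw [hg]; ring
      · have hg : gg u = 2 - 2 * u := by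
          unfold gg; rw [max_eq_left h0, max_eq_left (by linarith)]; ring
        rw [hg]; ring
    have hih := ih (gg u) hv
    rw [key, abs_div, abs_of_nonneg (by norm_num : (0:ℝ) ≤ 4)]
    have heq : (1/4:ℝ) * (1/4)^(n+1) = ((1/4) * (1/4)^n) / 4 := by ring
    rw [heq]
    linarith

lemma T_sum (n : ℕ) (u : ℝ) :
    T n u = u - ∑ s ∈ Finset.range n, B (s+1) u / 4^(s+1) := by
  induction n generalizing u with
  | zero => simp [T]
  | succ n ih =>
    rw [Finset.sum_range_succ']
    show u - gg u / 2 + T n (gg u) / 4 = _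
    rw [ih (gg u)]
    have hc : ∀ s ∈ Finset.range n,
        B (s+1+1) u / 4^(s+1+1) = (B (s+1) (gg u) / 4^(s+1)) / 4 := by
      intro s _
      rw [B_shift (s+1) u]
      ring
    rw [Finset.sum_congr rfl hc, ← Finset.sum_div]
    have hB1 : B (0+1) u = gg u := rfl
    rw [hB1]
    ring

/-- The hidden units, indexed by layer and position, as functions of the scalar input. -/
noncomputable def Y (l m : ℕ) (t : ℝ) : ℝ :=
  if l = 0 then (if m = 0 then max t 0 else max (-t) 0)
  else if m = 0 then max (B (l-1) |t| - 1/2) 0 else max (B (l-1) |t|) 0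

/-- Output-layer coefficients. -/
noncomputable def C (l m : ℕ) : ℝ :=
  if l = 0 then 1 else if m = 0 then 4/4^l else -2/4^l

lemma sumG (n : ℕ) (t : ℝ) :
    ∑ l ∈ Finset.range (n+1), (C l 0 * Y l 0 t + C l 1 * Y l 1 t) = T n |t| := by
  rw [Finset.sum_range_succ', T_sum]
  have h0 : C 0 0 * Y 0 0 t + C 0 1 * Y 0 1 t = |t| := by
    norm_num [C, Y]
  have hs : ∀ s ∈ Finset.range n,
      C (s+1) 0 * Y (s+1) 0 t + C (s+1) 1 * Y (s+1) 1 t = -(B (s+1) |t| / 4^(s+1)) := by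
    intro s _
    simp only [C, Y, Nat.succ_ne_zero, if_neg, if_pos rfl, Nat.add_sub_cancel]
    simp only [if_true, if_false]
    have : B (s+1) |t| = gg (B s |t|) := rfl
    rw [this]
    unfold gg
    have h4 : (4:ℝ)^(s+1) ≠ 0 := by positivity
    field_simp
    ring
  rw [Finset.sum_congr rfl hs, h0, Finset.sum_neg_distrib]
  ring

end SquareApproxAux

open SquareApproxAux

/-- The square function `x ↦ x²` on `[-1,1]` is approximated by the neural-net class
`F_{L,2}(ℝ)` with error at most `2^{-2L}`: there exists `f ∈ F_{L,2}(ℝ)` with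
`|x² − f(x)| ≤ 2^{-2L}` for all `x ∈ [-1,1]`. -/
theorem square_approx (L : ℕ) (hL : 0 < L) :
    ∃ f : (Fin 1 → ℝ) → ℝ, NNClass 1 L 2 f ∧
      ∀ x ∈ Set.Icc (-1 : ℝ) 1, |x ^ 2 - f (fun _ => x)| ≤ (2 : ℝ) ^ (-(2 * L : ℤ)) := by
  obtain ⟨n, rfl⟩ : ∃ n, L = n + 1 := ⟨L - 1, (Nat.succ_pred_eq_of_pos hL).symm⟩
  refine ⟨fun x => ∑ l : Fin (n+1),
      (C l.val 0 * Y l.val 0 (x 0) + C l.val 1 * Y l.val 1 (x 0)), ?_, ?_⟩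
  · refine ⟨fun l m x => Y l.val m.val (x 0), ?_, ?_, ?_⟩
    · intro h0 m
      fin_cases m
      · exact ⟨fun _ => 1, 0, fun x => by
          simp [Y, Fin.sum_univ_one]⟩
      · exact ⟨fun _ => -1, 0, fun x => by
          simp [Y, Fin.sum_univ_one]⟩
    · intro l hl m
      match l with
      | 0 =>
        fin_cases m
        · refine ⟨fun _ => 0, ![1, 1], -1/2, fun x => ?_⟩
          simp only [Y, Fin.sum_univ_one, Fin.sum_univ_two]
          norm_num
          rw [← max_zero_add_max_neg_zero_eq_abs_self (x 0)]
          simp only [B]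
          ring_nf
        · refine ⟨fun _ => 0, ![1, 1], 0, fun x => ?_⟩
          simp only [Y, Fin.sum_univ_one, Fin.sum_univ_two]
          norm_num
          rw [← max_zero_add_max_neg_zero_eq_abs_self (x 0)]
          simp only [B]
          ring_nf
          exact max_eq_left (add_nonneg (le_max_right _ _) (le_max_right _ _))
      | s + 1 =>
        fin_cases m
        · refine ⟨fun _ => 0, ![-4, 2], -1/2, fun x => ?_⟩
          simp only [Y, Fin.sum_univ_one, Fin.sum_univ_two]
          norm_num
          have : B (s+1) |x 0| = gg (B s |x 0|) := rfl
          rw [this]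
          unfold gg
          ring_nf
        · refine ⟨fun _ => 0, ![-4, 2], 0, fun x => ?_⟩
          simp only [Y, Fin.sum_univ_one, Fin.sum_univ_two]
          norm_num
          have : B (s+1) |x 0| = gg (B s |x 0|) := rfl
          rw [this]
          unfold gg
          ring_nf
    · refine ⟨fun _ => 0, fun l m => C l.val m.val, 0, fun x => ?_⟩
      simp [Fin.sum_univ_one, Fin.sum_univ_two]
  · intro x hx
    obtain ⟨hx1, hx2⟩ := hx
    have hval : ∑ l : Fin (n+1),
        (C l.val 0 * Y l.val 0 x + C l.val 1 * Y l.val 1 x) = T n |x| := by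
      rw [Fin.sum_univ_eq_sum_range (fun l => C l 0 * Y l 0 x + C l 1 * Y l 1 x) (n+1)]
      exact sumG n x
    have habs : |x| ∈ Set.Icc (0:ℝ) 1 := ⟨abs_nonneg x, abs_le.mpr ⟨hx1, hx2⟩⟩
    have hk := T_key n |x| habs
    have hx2eq : x ^ 2 = |x| ^ 2 := (sq_abs x).symm
    have hbound : (1/4:ℝ) * (1/4)^n = (2:ℝ) ^ (-(2 * ((n:ℤ)+1))) := by
      have h1 : (2:ℝ) ^ (-(2 * ((n:ℤ)+1))) = ((2:ℝ) ^ (-2:ℤ))^(n+1) := by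
        rw [← zpow_natCast ((2:ℝ) ^ (-2:ℤ)), ← zpow_mul]
        norm_num
      rw [h1]
      norm_num
      rw [pow_succ]
      ring
    simp only [hval]
    rw [hx2eq, abs_sub_comm]
    push_cast
    rw [← hbound]
    exact hk
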